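/- Let d₁, d₂ ≥ 2 and let x : Fin d₁ → ℝ and y : Fin d₂ → ℝ have all entries nonzero. Then e_{d₁·d₂ − 2}(x ⊗ y) = e_{d₁}(x)^{d₂} · e_{d₂}(y)^{d₁} · [ (e_{d₁−1}(x)/e_{d₁}(x))² · (e_{d₂−2}(y)/e_{d₂}(y)) + (e_{d₁−2}(x)/e_{d₁}(x)) · (e_{d₂−1}(y)/e_{d₂}(y))² − 2 · (e_{d₁−2}(x)/e_{d₁}(x)) · (e_{d₂−2}(y)/e_{d₂}(y)) ]. -/

import Mathlib

open Finset

/-- The `k`-th elementary symmetric polynomial of the entries of `x`. -/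
noncomputable def esym {ι : Type*} [Fintype ι] (k : ℕ) (x : ι → ℝ) : ℝ :=
  ∑ S ∈ Finset.univ.powersetCard k, ∏ i ∈ S, x i

/-- Tensor (Kronecker) product of two vectors. -/
def tensor {d₁ d₂ : ℕ} (x : Fin d₁ → ℝ) (y : Fin d₂ → ℝ) : Fin d₁ × Fin d₂ → ℝ :=
  fun p => x p.1 * y p.2

lemma sum_pc_one {ι : Type*} (s : Finset ι) (z : ι → ℝ) :
    ∑ S ∈ s.powersetCard 1, ∏ i ∈ S, z i = ∑ i ∈ s, z i := by
  rw [Finset.powersetCard_one, Finset.sum_map]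
  simp

lemma two_mul_pc_two {ι : Type*} [DecidableEq ι] (s : Finset ι) (z : ι → ℝ) :
    2 * (∑ S ∈ s.powersetCard 2, ∏ i ∈ S, z i)
      = (∑ i ∈ s, z i) ^ 2 - ∑ i ∈ s, z i ^ 2 := by
  induction s using Finset.induction with
  | empty =>
    have : (∅ : Finset ι).powersetCard 2 = ∅ := by
      ext S
      simp only [Finset.mem_powersetCard, Finset.subset_empty, Finset.notMem_empty, iff_false]
      rintro ⟨rfl, hc⟩
      simp at hc
    simp [this]
  | insert _ _ h ih =>
    rename_i a s
    rw [show (2:ℕ) = 1 + 1 from rfl, Finset.powersetCard_succ_insert h,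
      Finset.sum_union, Finset.sum_image]
    · have key : ∀ S ∈ s.powersetCard 1, ∏ i ∈ insert a S, z i = z a * ∏ i ∈ S, z i := by
        intro S hS
        rw [Finset.prod_insert]
        intro haS
        exact h ((Finset.mem_powersetCard.mp hS).1 haS)
      rw [Finset.sum_congr rfl key, ← Finset.mul_sum, sum_pc_one, Finset.sum_insert h,
        Finset.sum_insert h]
      have := ih
      ring_nf
      ring_nf at this
      linarith
    · intro S hS T hT hST
      have haS : a ∉ S := fun hc => h ((Finset.mem_powersetCard.mp hS).1 hc)
      have haT : a ∉ T := fun hc => h ((Finset.mem_powersetCard.mp hT).1 hc)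
      ext i
      constructor
      · intro hi
        have : i ∈ insert a S := Finset.mem_insert_of_mem hi
        rw [hST] at this
        rcases Finset.mem_insert.mp this with h' | h'
        · exact absurd (h' ▸ hi) haS
        · exact h'
      · intro hi
        have : i ∈ insert a T := Finset.mem_insert_of_mem hi
        rw [← hST] at this
        rcases Finset.mem_insert.mp this with h' | h'
        · exact absurd (h' ▸ hi) haT
        · exact h'
    · rw [Finset.disjoint_left]
      intro S hS hS'
      obtain ⟨T, hT, rfl⟩ := Finset.mem_image.mp hS'
      exact h ((Finset.mem_powersetCard.mp hS).1 (Finset.mem_insert_self a T))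

lemma esym_top {ι : Type*} [Fintype ι] (z : ι → ℝ) :
    esym (Fintype.card ι) z = ∏ i, z i := by
  unfold esym
  rw [← Finset.card_univ, Finset.powersetCard_self, Finset.sum_singleton]

lemma esym_compl {ι : Type*} [Fintype ι] [DecidableEq ι] (k : ℕ)
    (hk : k ≤ Fintype.card ι) (z : ι → ℝ) (hz : ∀ i, z i ≠ 0) :
    esym (Fintype.card ι - k) z = (∏ i, z i) * esym k (fun i => (z i)⁻¹) := by
  unfold esym
  rw [Finset.mul_sum]
  refine Finset.sum_nbij' (fun S => Sᶜ) (fun S => Sᶜ) ?_ ?_ ?_ ?_ ?_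
  · intro S hS
    rw [Finset.mem_powersetCard_univ] at hS ⊢
    rw [Finset.card_compl, hS, Nat.sub_sub_self hk]
  · intro S hS
    rw [Finset.mem_powersetCard_univ] at hS ⊢
    rw [Finset.card_compl, hS]
  · intro S _; simp
  · intro S _; simp
  · intro S _
    have h1 : (∏ i ∈ Sᶜ, z i) * ∏ i ∈ S, z i = ∏ i, z i := by
      rw [mul_comm]; exact Finset.prod_mul_prod_compl S z
    have h2 : (∏ i ∈ Sᶜ, z i) ≠ 0 := Finset.prod_ne_zero_iff.mpr fun i _ => hz i
    rw [Finset.prod_inv_distrib]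
    field_simp
    linarith [h1]

theorem esym_thirdTop_tensor (d₁ d₂ : ℕ) (h₁ : 2 ≤ d₁) (h₂ : 2 ≤ d₂)
    (x : Fin d₁ → ℝ) (y : Fin d₂ → ℝ)
    (hx : ∀ i, x i ≠ 0) (hy : ∀ j, y j ≠ 0) :
    esym (d₁ * d₂ - 2) (tensor x y) =
      (esym d₁ x) ^ d₂ * (esym d₂ y) ^ d₁ *
        ((esym (d₁ - 1) x / esym d₁ x) ^ 2 * (esym (d₂ - 2) y / esym d₂ y)
          + (esym (d₁ - 2) x / esym d₁ x) * (esym (d₂ - 1) y / esym d₂ y) ^ 2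
          - 2 * (esym (d₁ - 2) x / esym d₁ x) * (esym (d₂ - 2) y / esym d₂ y)) := by
  set u : Fin d₁ → ℝ := fun i => (x i)⁻¹ with hu
  set v : Fin d₂ → ℝ := fun j => (y j)⁻¹ with hv
  have hc1 : Fintype.card (Fin d₁) = d₁ := Fintype.card_fin d₁
  have hc2 : Fintype.card (Fin d₂) = d₂ := Fintype.card_fin d₂
  have hcN : Fintype.card (Fin d₁ × Fin d₂) = d₁ * d₂ := by simp
  have hpx : (∏ i, x i) ≠ 0 := Finset.prod_ne_zero_iff.mpr fun i _ => hx i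
  have hpy : (∏ j, y j) ≠ 0 := Finset.prod_ne_zero_iff.mpr fun j _ => hy j
  -- top esym values
  have hex : esym d₁ x = ∏ i, x i := by
    have := esym_top x; rwa [hc1] at this
  have hey : esym d₂ y = ∏ j, y j := by
    have := esym_top y; rwa [hc2] at this
  -- complement identities
  have hx1 : esym (d₁ - 1) x = (∏ i, x i) * esym 1 u := by
    have := esym_compl 1 (by omega) x hx; rwa [hc1] at this
  have hx2 : esym (d₁ - 2) x = (∏ i, x i) * esym 2 u := by
    have := esym_compl 2 (by omega) x hx; rwa [hc1] at this
  have hy1 : esym (d₂ - 1) y = (∏ j, y j) * esym 1 v := by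
    have := esym_compl 1 (by omega) y hy; rwa [hc2] at this
  have hy2 : esym (d₂ - 2) y = (∏ j, y j) * esym 2 v := by
    have := esym_compl 2 (by omega) y hy; rwa [hc2] at this
  have htensor_inv : (fun p : Fin d₁ × Fin d₂ => (tensor x y p)⁻¹) = tensor u v := by
    funext p; simp [tensor, hu, hv, mul_inv, mul_comm]
  have hN2 : (2 : ℕ) ≤ d₁ * d₂ := le_trans h₁ (Nat.le_mul_of_pos_right d₁ (by omega))
  have hLHS : esym (d₁ * d₂ - 2) (tensor x y)
      = (∏ p : Fin d₁ × Fin d₂, tensor x y p) * esym 2 (tensor u v) := by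
    rw [← hcN, esym_compl 2 (by omega) (tensor x y)
        (fun p => mul_ne_zero (hx p.1) (hy p.2)), htensor_inv]
  have hprodT : (∏ p : Fin d₁ × Fin d₂, tensor x y p) = (∏ i, x i) ^ d₂ * (∏ j, y j) ^ d₁ := by
    rw [Fintype.prod_prod_type]
    simp only [tensor]
    calc ∏ i, ∏ j, x i * y j = ∏ i, (x i ^ d₂ * ∏ j, y j) := by
          refine Finset.prod_congr rfl fun i _ => ?_
          rw [Finset.prod_mul_distrib, Finset.prod_const, Finset.card_univ, hc2]
      _ = (∏ i, x i) ^ d₂ * (∏ j, y j) ^ d₁ := by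
          rw [Finset.prod_mul_distrib, Finset.prod_const, Finset.prod_pow,
            Finset.card_univ, hc1]
  -- esym 1 equals sums
  have he1 : ∀ {ι : Type} [Fintype ι] (z : ι → ℝ), esym 1 z = ∑ i, z i := by
    intro ι _ z; exact sum_pc_one _ _
  -- esym 2 formulas
  have he2u : esym 2 u = ((∑ i, u i) ^ 2 - ∑ i, u i ^ 2) / 2 := by
    have := two_mul_pc_two Finset.univ u; unfold esym; linarith
  have he2v : esym 2 v = ((∑ j, v j) ^ 2 - ∑ j, v j ^ 2) / 2 := by
    have := two_mul_pc_two Finset.univ v; unfold esym; linarith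
  have he2t : esym 2 (tensor u v)
      = ((∑ i, u i) ^ 2 * (∑ j, v j) ^ 2 - (∑ i, u i ^ 2) * (∑ j, v j ^ 2)) / 2 := by
    have h := two_mul_pc_two Finset.univ (tensor u v)
    have hs1 : (∑ p : Fin d₁ × Fin d₂, tensor u v p) = (∑ i, u i) * (∑ j, v j) := by
      simp only [Fintype.sum_prod_type, tensor]
      rw [← Finset.sum_mul_sum]
    have hs2 : (∑ p : Fin d₁ × Fin d₂, tensor u v p ^ 2)
        = (∑ i, u i ^ 2) * (∑ j, v j ^ 2) := by
      simp only [Fintype.sum_prod_type, tensor, mul_pow]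
      rw [← Finset.sum_mul_sum]
    rw [hs1, hs2] at h
    unfold esym; linarith
  have r1 : esym (d₁ - 1) x / esym d₁ x = esym 1 u := by
    rw [hx1, hex, mul_div_cancel_left₀ _ hpx]
  have r2 : esym (d₁ - 2) x / esym d₁ x = esym 2 u := by
    rw [hx2, hex, mul_div_cancel_left₀ _ hpx]
  have r3 : esym (d₂ - 1) y / esym d₂ y = esym 1 v := by
    rw [hy1, hey, mul_div_cancel_left₀ _ hpy]
  have r4 : esym (d₂ - 2) y / esym d₂ y = esym 2 v := by
    rw [hy2, hey, mul_div_cancel_left₀ _ hpy]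
  rw [hLHS, hprodT, r1, r2, r3, r4, hex, hey, he2t, he1 u, he1 v, he2u, he2v]
  ring
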